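/- For k \in (0, 1/4), define c(k) = (2\cos((2k+1)\pi/3))^{1/(2k)}. Then c is a strictly decreasing continuous function of k on (0,1/4), with c(k) \to \exp(-\pi/\sqrt{3}) as k \to 0^+ and c(k) \to 0 as k \to 1/4^-. -/

import Mathlib

open Real Filter

noncomputable def cOf (k : ℝ) : ℝ := (2 * Real.cos ((2 * k + 1) * π / 3)) ^ (1 / (2 * k))

namespace CofAux

noncomputable def θf (k : ℝ) : ℝ := (2 * k + 1) * π / 3
noncomputable def bf (k : ℝ) : ℝ := 2 * Real.cos (θf k)
noncomputable def ff (k : ℝ) : ℝ := Real.log (bf k) / (2 * k)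

lemma theta_cont : Continuous θf := by unfold θf; fun_prop

lemma b_cont : Continuous bf := by
  unfold bf; exact continuous_const.mul (Real.continuous_cos.comp theta_cont)

lemma theta_mem {k : ℝ} (hk : k ∈ Set.Ioo (0:ℝ) (1/4)) :
    θf k ∈ Set.Ioo (π/3) (π/2) := by
  obtain ⟨h1, h2⟩ := hk
  have hπ := Real.pi_pos
  constructor <;> unfold θf <;> nlinarith

lemma cos_pos {k : ℝ} (hk : k ∈ Set.Ioo (0:ℝ) (1/4)) : 0 < Real.cos (θf k) := by
  obtain ⟨h1, h2⟩ := theta_mem hk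
  have hπ := Real.pi_pos
  apply Real.cos_pos_of_mem_Ioo
  constructor <;> nlinarith

lemma b_pos {k : ℝ} (hk : k ∈ Set.Ioo (0:ℝ) (1/4)) : 0 < bf k := by
  have := cos_pos hk; unfold bf; linarith

lemma cOf_eq {k : ℝ} (hk : k ∈ Set.Ioo (0:ℝ) (1/4)) : cOf k = Real.exp (ff k) := by
  rw [cOf, Real.rpow_def_of_pos (by have := b_pos hk; simpa [bf, θf] using this)]
  rw [ff, bf, θf, mul_one_div]

/-- the key function g on (π/3, π/2) -/
noncomputable def gf (t : ℝ) : ℝ := (t - π/3) * Real.tan t + Real.log (2 * Real.cos t)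

lemma hasDerivAt_g {t : ℝ} (hc : Real.cos t ≠ 0) :
    HasDerivAt gf ((t - π/3) / Real.cos t ^ 2) t := by
  have h1 : HasDerivAt (fun t : ℝ => (t - π/3) * Real.tan t)
      (1 * Real.tan t + (t - π/3) * (1 / Real.cos t ^ 2)) t :=
    ((hasDerivAt_id t).sub_const _).mul (Real.hasDerivAt_tan hc)
  have h2 : HasDerivAt (fun t : ℝ => Real.log (2 * Real.cos t))
      ((2 * (-Real.sin t)) / (2 * Real.cos t)) t :=
    ((Real.hasDerivAt_cos t).const_mul 2).log (by simpa using hc)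
  have := h1.add h2
  refine this.congr_deriv ?_
  rw [Real.tan_eq_sin_div_cos]
  field_simp
  ring

lemma g_pos {t : ℝ} (ht : t ∈ Set.Ioo (π/3) (π/2)) : 0 < gf t := by
  have hπ := Real.pi_pos
  have hcos : ∀ s ∈ Set.Ico (π/3) (π/2), 0 < Real.cos s := by
    intro s hs
    apply Real.cos_pos_of_mem_Ioo
    constructor <;> [nlinarith [hs.1]; nlinarith [hs.2]]
  have hmono : StrictMonoOn gf (Set.Ico (π/3) (π/2)) := by
    apply strictMonoOn_of_deriv_pos (convex_Ico _ _)
    · intro s hs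
      exact ((hasDerivAt_g (hcos s hs).ne').continuousAt).continuousWithinAt
    · intro s hs
      rw [interior_Ico] at hs
      rw [(hasDerivAt_g (hcos s ⟨hs.1.le, hs.2⟩).ne').deriv]
      have h1 : 0 < Real.cos s ^ 2 := pow_pos (hcos s ⟨hs.1.le, hs.2⟩) 2
      have h2 : 0 < s - π/3 := by linarith [hs.1]
      exact div_pos h2 h1
  have h0 : gf (π/3) = 0 := by simp [gf, Real.cos_pi_div_three]
  have := hmono (Set.mem_Ico.2 ⟨le_refl _, by linarith [ht.2]⟩)
      (Set.mem_Ico.2 ⟨ht.1.le, ht.2⟩) ht.1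
  rwa [h0] at this

lemma hasDerivAt_theta (k : ℝ) : HasDerivAt θf (2 * π / 3) k := by
  have h := ((((hasDerivAt_id k).const_mul 2).add_const 1).mul_const π).div_const 3
  simp only [id_eq, mul_one] at h
  exact h

lemma hasDerivAt_b (k : ℝ) :
    HasDerivAt bf (-Real.sin (θf k) * (2 * π / 3) * 2) k := by
  have := ((Real.hasDerivAt_cos (θf k)).comp k (hasDerivAt_theta k)).const_mul 2
  refine this.congr_deriv ?_
  ring

lemma hasDerivAt_f {k : ℝ} (hk : k ∈ Set.Ioo (0:ℝ) (1/4)) :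
    HasDerivAt ff
      (((-Real.sin (θf k) * (2 * π / 3) * 2) / bf k * (2 * k)
        - Real.log (bf k) * 2) / (2 * k) ^ 2) k := by
  have hbne : bf k ≠ 0 := (b_pos hk).ne'
  have hlog : HasDerivAt (fun k => Real.log (bf k))
      ((-Real.sin (θf k) * (2 * π / 3) * 2) / bf k) k := (hasDerivAt_b k).log hbne
  have h2k : HasDerivAt (fun k : ℝ => 2 * k) 2 k := by
    simpa using (hasDerivAt_id k).const_mul 2
  have h2kne : (2 * k : ℝ) ≠ 0 := by have := hk.1; positivity
  exact hlog.div h2k h2kne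

lemma deriv_f_neg {k : ℝ} (hk : k ∈ Set.Ioo (0:ℝ) (1/4)) : deriv ff k < 0 := by
  rw [(hasDerivAt_f hk).deriv]
  have hθ := theta_mem hk
  have hc := cos_pos hk
  have hg := g_pos hθ
  have hknz : (0:ℝ) < k := hk.1
  have hnum : (-Real.sin (θf k) * (2 * π / 3) * 2) / bf k * (2 * k)
        - Real.log (bf k) * 2 = -2 * gf (θf k) := by
    rw [gf, Real.tan_eq_sin_div_cos, bf]
    have h2k : θf k - π / 3 = 2 * π / 3 * k := by rw [θf]; ring
    rw [h2k]
    field_simp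
    ring
  rw [hnum]
  have hden : (0:ℝ) < (2 * k) ^ 2 := by positivity
  apply div_neg_of_neg_of_pos _ hden
  linarith

lemma contOn_f : ContinuousOn ff (Set.Ioo (0:ℝ) (1/4)) := by
  apply ContinuousOn.div
  · exact ContinuousOn.log b_cont.continuousOn (fun k hk => (b_pos hk).ne')
  · exact (continuous_const.mul continuous_id).continuousOn
  · intro k hk; have := hk.1; positivity

lemma strictAntiOn_f : StrictAntiOn ff (Set.Ioo (0:ℝ) (1/4)) := by
  apply strictAntiOn_of_deriv_neg (convex_Ioo _ _) contOn_f
  intro k hk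
  rw [interior_Ioo] at hk
  exact deriv_f_neg hk

end CofAux

open CofAux in
theorem stmt_7 :
    StrictAntiOn cOf (Set.Ioo (0:ℝ) (1/4)) ∧
    ContinuousOn cOf (Set.Ioo (0:ℝ) (1/4)) ∧
    Tendsto cOf (nhdsWithin 0 (Set.Ioi (0:ℝ))) (nhds (Real.exp (-π / Real.sqrt 3))) ∧
    Tendsto cOf (nhdsWithin (1/4) (Set.Iio (1/4:ℝ))) (nhds 0) := by
  refine ⟨?_, ?_, ?_, ?_⟩
  · intro x hx y hy hxy
    rw [cOf_eq hx, cOf_eq hy, Real.exp_lt_exp]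
    exact strictAntiOn_f hx hy hxy
  · exact (Real.continuous_exp.comp_continuousOn contOn_f).congr
      (fun x hx => cOf_eq hx)
  · -- limit at 0⁺
    have hπ := Real.pi_pos
    have hs3 : (0:ℝ) < Real.sqrt 3 := Real.sqrt_pos.2 (by norm_num)
    have hs3sq : Real.sqrt 3 ^ 2 = 3 := Real.sq_sqrt (by norm_num)
    have hbne : bf 0 ≠ 0 := by
      rw [bf, θf]; norm_num [Real.cos_pi_div_three]
    have hD : HasDerivAt (fun k => Real.log (bf k))
        ((-Real.sin (θf 0) * (2 * π / 3) * 2) / bf 0) 0 := (hasDerivAt_b 0).log hbne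
    have hval : (-Real.sin (θf 0) * (2 * π / 3) * 2) / bf 0 = -2 * π / Real.sqrt 3 := by
      rw [bf, θf]
      norm_num [Real.cos_pi_div_three, Real.sin_pi_div_three]
      rw [eq_div_iff hs3.ne']
      nlinarith [hs3sq]
    rw [hval] at hD
    have hslope := hasDerivAt_iff_tendsto_slope.mp hD
    have h0 : Real.log (bf 0) = 0 := by
      rw [bf, θf]; norm_num [Real.cos_pi_div_three]
    have hslope' : Tendsto (fun k => Real.log (bf k) / k) (nhdsWithin 0 (Set.Ioi (0:ℝ)))
        (nhds (-2 * π / Real.sqrt 3)) := by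
      have := hslope.mono_left (nhdsWithin_mono 0 (fun x hx => by
        simp only [Set.mem_compl_iff, Set.mem_singleton_iff]
        exact ne_of_gt hx))
      refine this.congr (fun k => ?_)
      rw [slope_def_field, h0]
      simp
    have hf : Tendsto ff (nhdsWithin 0 (Set.Ioi (0:ℝ))) (nhds (-π / Real.sqrt 3)) := by
      have h2 := hslope'.div_const 2
      have heq : -2 * π / Real.sqrt 3 / 2 = -π / Real.sqrt 3 := by ring
      rw [heq] at h2
      refine h2.congr (fun k => ?_)
      rw [ff]
      ring
    have := (Real.continuous_exp.tendsto _).comp hf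
    refine this.congr' ?_
    filter_upwards [Ioo_mem_nhdsGT_of_mem (by norm_num : (0:ℝ) ∈ Set.Ico 0 (1/4))] with k hk
    exact (cOf_eq hk).symm
  · -- limit at 1/4⁻
    have hb4 : bf (1/4) = 0 := by
      have hθ : θf (1/4 : ℝ) = π/2 := by rw [θf]; ring
      rw [bf, hθ, Real.cos_pi_div_two, mul_zero]
    have hb : Tendsto bf (nhds (1/4 : ℝ)) (nhds 0) := hb4 ▸ b_cont.tendsto (1/4)
    have hec : ContinuousAt (fun k : ℝ => 1 / (2 * k)) (1/4) :=
      ContinuousAt.div continuousAt_const (by fun_prop) (by norm_num)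
    have h2 : (1:ℝ) / (2 * (1/4)) = 2 := by norm_num
    have he : Tendsto (fun k : ℝ => 1 / (2 * k)) (nhds (1/4 : ℝ)) (nhds 2) := by
      have ht := hec.tendsto
      rwa [h2] at ht
    have hpair : Tendsto (fun k : ℝ => ((bf k, 1 / (2 * k)) : ℝ × ℝ))
        (nhdsWithin (1/4) (Set.Iio (1/4:ℝ))) (nhds ((0, 2) : ℝ × ℝ)) :=
      (hb.prodMk_nhds he).mono_left nhdsWithin_le_nhds
    have hrpow : ContinuousAt (fun p : ℝ × ℝ => p.1 ^ p.2) ((0, 2) : ℝ × ℝ) :=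
      Real.continuousAt_rpow (0, 2) (Or.inr (by norm_num))
    have hcomp := hrpow.tendsto.comp hpair
    simp only [Real.zero_rpow (by norm_num : (2:ℝ) ≠ 0)] at hcomp
    refine hcomp.congr (fun k => ?_)
    simp only [Function.comp_apply]
    rw [cOf, bf, θf]
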